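/- Let x be a random variable with chi-squared distribution with n > 2 degrees of freedom, and let c > 0. Then P(x > n - 2 + 2*sqrt(c(n-2) ln n)) ≤ α n^{-c}, where α = (1/sqrt(π(n-2)) + 1/(2 sqrt(cπ ln n))) · exp((4/3) sqrt(c^3 ln^3 n / (n-2))). -/

import Mathlib

open Real Set

/-- helper: F 0 ≤ F t for t ≥ 0 when F' ≥ 0 on Ici 0 -/
lemma mono_from_deriv {F F' : ℝ → ℝ}
    (hd : ∀ t : ℝ, 0 ≤ t → HasDerivAt F (F' t) t)
    (h0 : ∀ t : ℝ, 0 ≤ t → 0 ≤ F' t) {t : ℝ} (ht : 0 ≤ t) : F 0 ≤ F t := by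
  have hmono : MonotoneOn F (Ici (0:ℝ)) := by
    apply monotoneOn_of_deriv_nonneg (convex_Ici 0)
    · exact fun x hx => (hd x hx).continuousAt.continuousWithinAt
    · intro x hx
      rw [interior_Ici] at hx
      exact (hd x hx.le).differentiableAt.differentiableWithinAt
    · intro x hx
      rw [interior_Ici] at hx
      rw [(hd x hx.le).deriv]
      exact h0 x hx.le
  exact hmono (self_mem_Ici) ht ht

lemma log_ge_ineq {t : ℝ} (ht : 0 ≤ t) : 2 * t / (2 + t) ≤ Real.log (1 + t) := by
  have h := mono_from_deriv (F := fun t => Real.log (1 + t) - 2 * t / (2 + t))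
    (F' := fun t => 1 / (1 + t) - 4 / (2 + t) ^ 2) ?_ ?_ ht
  · simpa using h
  · intro u hu
    have h1 : (0:ℝ) < 1 + u := by linarith
    have h2 : (0:ℝ) < 2 + u := by linarith
    have hlog : HasDerivAt (fun t : ℝ => Real.log (1 + t)) (1 / (1 + u)) u := by
      have := (Real.hasDerivAt_log h1.ne').comp u ((hasDerivAt_id u).const_add 1)
      simpa [one_div, Function.comp_def] using this
    have hdiv : HasDerivAt (fun t : ℝ => 2 * t / (2 + t)) (4 / (2 + u) ^ 2) u := by
      have h := ((hasDerivAt_id u).const_mul 2).div ((hasDerivAt_id u).const_add 2) h2.ne'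
      exact h.congr_deriv (by simp only [id]; field_simp; ring)
    exact hlog.sub hdiv
  · intro u hu
    have h1 : (0:ℝ) < 1 + u := by linarith
    have h2 : (0:ℝ) < 2 + u := by linarith
    rw [sub_nonneg, div_le_div_iff₀ (by positivity) h1]
    nlinarith [sq_nonneg u]

lemma log_le_cubic {u : ℝ} (hu : 0 ≤ u) : Real.log (1 + u) ≤ u - u ^ 2 / 2 + u ^ 3 / 3 := by
  have h := mono_from_deriv (F := fun u => u - u ^ 2 / 2 + u ^ 3 / 3 - Real.log (1 + u))
    (F' := fun u => 1 - u + u ^ 2 - 1 / (1 + u)) ?_ ?_ hu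
  · simpa using h
  · intro v hv
    have h1 : (0:ℝ) < 1 + v := by linarith
    have hlog : HasDerivAt (fun t : ℝ => Real.log (1 + t)) (1 / (1 + v)) v := by
      have := (Real.hasDerivAt_log h1.ne').comp v ((hasDerivAt_id v).const_add 1)
      simpa [one_div, Function.comp_def] using this
    have hpoly : HasDerivAt (fun t : ℝ => t - t ^ 2 / 2 + t ^ 3 / 3) (1 - v + v ^ 2) v := by
      have h := ((hasDerivAt_id v).sub (((hasDerivAt_pow 2 v)).div_const 2)).add
        ((hasDerivAt_pow 3 v).div_const 3)
      exact h.congr_deriv (by norm_num)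
    exact hpoly.sub hlog
  · intro v hv
    have h1 : (0:ℝ) < 1 + v := by linarith
    rw [sub_nonneg, div_le_iff₀ h1]
    nlinarith

/-- integer Stirling lower bound -/
lemma factorial_stirling (N : ℕ) (hN : 1 ≤ N) :
    Real.sqrt (2 * π * N) * ((N : ℝ) / Real.exp 1) ^ N ≤ ((Nat.factorial N : ℕ) : ℝ) := by
  obtain ⟨k, rfl⟩ : ∃ k, N = k + 1 := ⟨N - 1, (Nat.succ_pred_eq_of_pos hN).symm⟩
  have hlim : Filter.Tendsto (Stirling.stirlingSeq ∘ Nat.succ) Filter.atTop (nhds (Real.sqrt π)) :=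
    (Filter.tendsto_add_atTop_iff_nat 1).mpr Stirling.tendsto_stirlingSeq_sqrt_pi
  have hge : Real.sqrt π ≤ Stirling.stirlingSeq (k + 1) :=
    Stirling.stirlingSeq'_antitone.le_of_tendsto hlim k
  rw [Stirling.stirlingSeq] at hge
  have hpos : (0:ℝ) < Real.sqrt (2*((k:ℕ)+1:ℕ)) * ((((k:ℕ)+1:ℕ):ℝ)/Real.exp 1)^(k+1) := by
    positivity
  rw [le_div_iff₀ hpos] at hge
  calc Real.sqrt (2*π*((k:ℕ)+1:ℕ)) * ((((k:ℕ)+1:ℕ):ℝ)/Real.exp 1)^(k+1)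
      = Real.sqrt π * (Real.sqrt (2*((k:ℕ)+1:ℕ)) * ((((k:ℕ)+1:ℕ):ℝ)/Real.exp 1)^(k+1)) := by
        rw [show (2*π*(((k:ℕ)+1:ℕ):ℝ)) = π * (2*(((k:ℕ)+1:ℕ):ℝ)) by ring,
          Real.sqrt_mul Real.pi_pos.le]
        ring
    _ ≤ ((Nat.factorial (k+1) : ℕ) : ℝ) := hge

noncomputable def gaux (x : ℝ) : ℝ :=
  Real.log (Real.Gamma (x+1)) - ((x + 1/2) * Real.log x - x)

lemma gaux_step (x : ℝ) (hx : 0 < x) : gaux (x+1) ≤ gaux x := by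
  have hΓ : Real.Gamma (x+1+1) = (x+1) * Real.Gamma (x+1) := Real.Gamma_add_one (by positivity)
  have hΓpos : 0 < Real.Gamma (x+1) := Real.Gamma_pos_of_pos (by positivity)
  have key : 1 ≤ (x + 1/2) * (Real.log (x+1) - Real.log x) := by
    have h := log_ge_ineq (t := 1/x) (by positivity)
    have hx1 : Real.log (x+1) - Real.log x = Real.log (1 + 1/x) := by
      rw [← Real.log_div (by positivity) hx.ne']
      congr 1
      field_simp
    have h2 : 2*(1/x)/(2+1/x) = 1/(x+1/2) := by
      rw [div_eq_div_iff (by positivity) (by positivity)]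
      field_simp
    rw [h2] at h
    rw [hx1]
    calc (1:ℝ) = (x+1/2) * (1/(x+1/2)) := by field_simp
      _ ≤ (x + 1/2) * Real.log (1 + 1/x) := by
          apply mul_le_mul_of_nonneg_left h (by positivity)
  unfold gaux
  rw [hΓ, Real.log_mul (by positivity) hΓpos.ne']
  nlinarith [key]

lemma gaux_ge_shift (x : ℝ) (hx : 0 < x) (j : ℕ) : gaux (x + j) ≤ gaux x := by
  induction j with
  | zero => simp
  | succ k ih =>
      have hstep := gaux_step (x + k) (by positivity)
      calc gaux (x + (k+1:ℕ)) = gaux ((x + k) + 1) := by push_cast; ring_nf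
        _ ≤ gaux (x + k) := hstep
        _ ≤ gaux x := ih

lemma gaux_lower (N : ℕ) (hN : 1 ≤ N) (s : ℝ) (hs0 : 0 ≤ s) (hs1 : s < 1) :
    Real.log (Real.sqrt (2*π)) - s/(2*N) ≤ gaux ((N:ℝ) + s) := by
  have hNpos : (0:ℝ) < N := by exact_mod_cast hN
  set y : ℝ := (N:ℝ) + s with hy
  have hypos : 0 < y := by positivity
  have hy1 : (1:ℝ) ≤ y := by
    have : (1:ℝ) ≤ (N:ℝ) := by exact_mod_cast hN
    simp only [hy]; linarith
  have hΓy : 0 < Real.Gamma y := Real.Gamma_pos_of_pos hypos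
  have hΓy1 : Real.Gamma (y+1) = y * Real.Gamma y := Real.Gamma_add_one hypos.ne'
  -- convexity: log Γ(N+1) ≤ log Γ(y) + (1-s) * log y
  have hcvx := Real.convexOn_log_Gamma.2 (Set.mem_Ioi.mpr hypos)
    (Set.mem_Ioi.mpr (by linarith : (0:ℝ) < y+1)) hs0 (by linarith : (0:ℝ) ≤ 1 - s) (by ring)
  have harg : s • y + (1-s) • (y+1) = (N:ℝ)+1 := by
    simp only [smul_eq_mul, hy]; ring
  rw [harg] at hcvx
  simp only [Function.comp_apply, smul_eq_mul] at hcvx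
  rw [hΓy1, Real.log_mul hypos.ne' hΓy.ne'] at hcvx
  have hfact : Real.Gamma ((N:ℝ)+1) = ((Nat.factorial N : ℕ) : ℝ) := by
    exact_mod_cast Real.Gamma_nat_eq_factorial N
  rw [hfact] at hcvx
  -- hcvx : log N! ≤ s * log Γ y + (1-s)*(log y + log Γ y)
  -- i.e. log N! + s log y ≤ log Γ(y+1) = log y + log Γ y
  have hi : Real.log ((Nat.factorial N : ℕ) : ℝ) + s * Real.log y ≤
      Real.log (Real.Gamma (y+1)) := by
    rw [hΓy1, Real.log_mul hypos.ne' hΓy.ne']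
    nlinarith [hcvx]
  -- Stirling: log √(2π) + (N+1/2) log N - N ≤ log N!
  have hii : Real.log (Real.sqrt (2*π)) + ((N:ℝ)+1/2) * Real.log N - N ≤
      Real.log ((Nat.factorial N : ℕ) : ℝ) := by
    have h := factorial_stirling N hN
    have hfpos : (0:ℝ) < Real.sqrt (2*π*N) * ((N:ℝ)/Real.exp 1)^N := by positivity
    have hlog := Real.log_le_log hfpos h
    rw [Real.log_mul (by positivity) (by positivity), Real.log_pow,
      Real.log_div (by positivity) (Real.exp_pos 1).ne', Real.log_exp,
      show 2*π*(N:ℝ) = (2*π)*(N:ℝ) by ring,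
      Real.sqrt_mul (by positivity), Real.log_mul (by positivity) (by positivity),
      Real.log_sqrt hNpos.le] at hlog
    calc Real.log (Real.sqrt (2*π)) + ((N:ℝ)+1/2) * Real.log N - N
        = Real.log (Real.sqrt (2*π)) + Real.log (N:ℝ)/2 + (N:ℝ)*(Real.log N - 1) := by ring
      _ ≤ _ := hlog
  -- log y - log N ≤ s / N
  have hiii : Real.log y - Real.log N ≤ s / N := by
    have h := Real.log_le_sub_one_of_pos (show (0:ℝ) < y / N by positivity)
    rw [Real.log_div hypos.ne' hNpos.ne'] at h
    have : y / (N:ℝ) - 1 = s / N := by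
      rw [div_sub' hNpos.ne']
      simp only [hy]
      ring_nf
    linarith [h, this.symm.le]
  -- combine
  have hlogy0 : 0 ≤ Real.log y := Real.log_nonneg hy1
  unfold gaux
  have expand : Real.log (Real.Gamma (y+1)) - ((y + 1/2) * Real.log y - y) ≥
      Real.log ((Nat.factorial N : ℕ) : ℝ) - ((N:ℝ)+1/2)*Real.log y + y := by
    nlinarith [hi]
  have : Real.log (Real.sqrt (2*π)) - s/(2*N) ≤
      Real.log ((Nat.factorial N : ℕ) : ℝ) - ((N:ℝ)+1/2)*Real.log y + y := by
    have hNy : ((N:ℝ)+1/2)*(Real.log y - Real.log N) ≤ ((N:ℝ)+1/2)*(s/N) :=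
      mul_le_mul_of_nonneg_left hiii (by positivity)
    have hsN : ((N:ℝ)+1/2)*(s/N) = s + s/(2*N) := by field_simp
    nlinarith [hii]
  linarith [expand, this]

lemma gamma_stirling_log (x : ℝ) (hx : 0 < x) : Real.log (Real.sqrt (2*π)) ≤ gaux x := by
  set s : ℝ := x - (⌊x⌋₊ : ℝ) with hs
  have hs0 : 0 ≤ s := by
    have := Nat.floor_le hx.le
    simp only [hs]; linarith
  have hs1 : s < 1 := by
    have := Nat.lt_floor_add_one x
    simp only [hs]; linarith
  have key : ∀ j : ℕ, Real.log (Real.sqrt (2*π)) - s/(2*((⌊x⌋₊ + (j+1) : ℕ):ℝ)) ≤ gaux x := by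
    intro j
    have h1 := gaux_lower (⌊x⌋₊ + (j+1)) (by omega) s hs0 hs1
    have h2 := gaux_ge_shift x hx (j+1)
    have harg : ((⌊x⌋₊ + (j+1) : ℕ):ℝ) + s = x + ((j+1 : ℕ):ℝ) := by push_cast; simp only [hs]; ring
    rw [harg] at h1
    exact h1.trans h2
  have hlim : Filter.Tendsto
      (fun j : ℕ => Real.log (Real.sqrt (2*π)) - s/(2*((⌊x⌋₊ + (j+1) : ℕ):ℝ)))
      Filter.atTop (nhds (Real.log (Real.sqrt (2*π)) - 0)) := by
    apply Filter.Tendsto.const_sub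
    apply Filter.Tendsto.div_atTop (tendsto_const_nhds)
    apply Filter.Tendsto.const_mul_atTop (by norm_num : (0:ℝ) < 2)
    apply Filter.tendsto_atTop_mono (fun j : ℕ => by
      have : (j:ℝ) ≤ ((⌊x⌋₊ + (j+1) : ℕ):ℝ) := by push_cast; linarith
      exact this)
    exact tendsto_natCast_atTop_atTop
  rw [sub_zero] at hlim
  exact le_of_tendsto hlim (Filter.Eventually.of_forall key)

lemma gamma_stirling {x : ℝ} (hx : 0 < x) :
    Real.sqrt (2*π) * (x ^ (x : ℝ) * (Real.sqrt x * Real.exp (-x))) ≤ Real.Gamma (x+1) := by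
  have h := gamma_stirling_log x hx
  have hΓ : 0 < Real.Gamma (x+1) := Real.Gamma_pos_of_pos (by positivity)
  have hlog : Real.log (Real.sqrt (2*π)) + ((x + 1/2) * Real.log x - x) ≤
      Real.log (Real.Gamma (x+1)) := by
    unfold gaux at h; linarith
  calc Real.sqrt (2*π) * (x ^ (x:ℝ) * (Real.sqrt x * Real.exp (-x)))
      = Real.exp (Real.log (Real.sqrt (2*π)) + ((x + 1/2) * Real.log x - x)) := by
        have e1 : Real.exp (x * Real.log x) = x ^ (x:ℝ) := by
          rw [Real.rpow_def_of_pos hx, mul_comm]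
        have e2 : Real.exp (1/2 * Real.log x) = Real.sqrt x := by
          rw [Real.sqrt_eq_rpow, Real.rpow_def_of_pos hx, mul_comm]
        rw [Real.exp_add, Real.exp_log (by positivity),
          show (x + 1/2) * Real.log x - x = x * Real.log x + (1/2 * Real.log x + (-x)) by ring,
          Real.exp_add, Real.exp_add, e1, e2]
    _ ≤ Real.exp (Real.log (Real.Gamma (x+1))) := Real.exp_le_exp.mpr hlog
    _ = Real.Gamma (x+1) := Real.exp_log hΓ

open MeasureTheory Filter

private theorem chiSq_tail_bound' (n : ℕ) (hn : 2 < n) (c : ℝ) (hc : 0 < c) :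
    (volume.withDensity fun x : ℝ => ENNReal.ofReal
        (if 0 < x then
          x ^ ((n : ℝ) / 2 - 1) * Real.exp (-x / 2) /
            (2 ^ ((n : ℝ) / 2) * Real.Gamma ((n : ℝ) / 2))
        else 0))
      {x : ℝ | (n : ℝ) - 2 + 2 * Real.sqrt (c * ((n : ℝ) - 2) * Real.log n) < x}
    ≤ ENNReal.ofReal
        ((1 / Real.sqrt (Real.pi * ((n : ℝ) - 2)) +
            1 / (2 * Real.sqrt (c * Real.pi * Real.log n))) *
          Real.exp (4 / 3 * Real.sqrt (c ^ 3 * Real.log n ^ 3 / ((n : ℝ) - 2))) *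
          (n : ℝ) ^ (-c)) := by
  have hn3 : (3:ℝ) ≤ (n:ℝ) := by exact_mod_cast hn
  set m : ℝ := (n:ℝ) - 2 with hm_def
  have hm : 0 < m := by simp only [hm_def]; linarith
  set L : ℝ := Real.log n with hL_def
  have hL : 0 < L := Real.log_pos (by linarith)
  set t : ℝ := 2 * Real.sqrt (c * m * L) with ht_def
  have ht : 0 < t := by positivity
  set a : ℝ := m + t with ha_def
  have ha : 0 < a := by positivity
  set p : ℝ := (n:ℝ) / 2 - 1 with hp_def
  have hpm : p = m / 2 := by simp only [hp_def, hm_def]; ring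
  have hp0 : 0 < p := by rw [hpm]; positivity
  set G : ℝ := 2 ^ ((n:ℝ)/2) * Real.Gamma ((n:ℝ)/2) with hG_def
  have hG : 0 < G := by
    have : 0 < Real.Gamma ((n:ℝ)/2) := Real.Gamma_pos_of_pos (by linarith)
    positivity
  set f : ℝ → ℝ := fun x => x ^ p * Real.exp (-x/2) / G with hf_def
  set r : ℝ := t / (2*a) with hr_def
  have hr : 0 < r := by positivity
  have hfa : 0 < f a := by
    simp only [hf_def]
    positivity
  -- Step 1 : measure as lintegral over Ioi a
  have hset : {x : ℝ | (n:ℝ) - 2 + 2 * Real.sqrt (c * ((n:ℝ) - 2) * Real.log n) < x}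
      = Ioi a := by
    ext x; simp [ha_def, ht_def, hm_def, hL_def, Set.mem_Ioi]
  rw [hset, withDensity_apply _ measurableSet_Ioi]
  have hcongr : ∫⁻ x in Ioi a, ENNReal.ofReal
      (if 0 < x then x ^ ((n : ℝ) / 2 - 1) * Real.exp (-x / 2) /
            (2 ^ ((n : ℝ) / 2) * Real.Gamma ((n : ℝ) / 2)) else 0)
      = ∫⁻ x in Ioi a, ENNReal.ofReal (f x) := by
    apply setLIntegral_congr_fun measurableSet_Ioi
    intro x hx
    simp only
    rw [if_pos (lt_trans ha hx)]
  rw [hcongr]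
  -- Step 2 : pointwise exponential bound
  have hpoint : ∀ x ∈ Ioi a, f x ≤ f a * Real.exp (-(r * (x - a))) := by
    intro x hx
    have hxa : a < x := hx
    have hxpos : 0 < x := lt_trans ha hxa
    have hxp : x ^ p ≤ a ^ p * Real.exp (p * ((x - a)/a)) := by
      have hlog : Real.log x - Real.log a ≤ (x - a)/a := by
        have h := Real.log_le_sub_one_of_pos (show 0 < x/a by positivity)
        rw [Real.log_div hxpos.ne' ha.ne'] at h
        have : x/a - 1 = (x-a)/a := by field_simp
        linarith
      calc x ^ p = Real.exp (Real.log x * p) := Real.rpow_def_of_pos hxpos p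
        _ = Real.exp (Real.log a * p) * Real.exp ((Real.log x - Real.log a) * p) := by
            rw [← Real.exp_add]; ring_nf
        _ ≤ Real.exp (Real.log a * p) * Real.exp (p * ((x-a)/a)) := by
            apply mul_le_mul_of_nonneg_left _ (Real.exp_pos _).le
            apply Real.exp_le_exp.mpr
            calc (Real.log x - Real.log a) * p = p * (Real.log x - Real.log a) := by ring
              _ ≤ p * ((x-a)/a) := mul_le_mul_of_nonneg_left hlog hp0.le
        _ = a ^ p * Real.exp (p * ((x-a)/a)) := by rw [← Real.rpow_def_of_pos ha p]
    have hexp : Real.exp (p * ((x - a)/a)) * Real.exp (-x/2) =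
        Real.exp (-a/2) * Real.exp (-(r * (x - a))) := by
      rw [← Real.exp_add, ← Real.exp_add]
      congr 1
      rw [hpm, hr_def, ha_def]
      field_simp
      ring
    calc f x = x ^ p * Real.exp (-x/2) / G := rfl
      _ ≤ (a ^ p * Real.exp (p * ((x-a)/a))) * Real.exp (-x/2) / G := by
          gcongr
      _ = f a * Real.exp (-(r * (x - a))) := by
          simp only [hf_def]
          rw [mul_assoc, hexp]
          ring
  -- Step 3 : the exponential integral
  have hint : IntegrableOn (fun x => f a * Real.exp (-(r * (x - a)))) (Ioi a) := by
    have heq : (fun x : ℝ => f a * Real.exp (-(r * (x - a)))) =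
        fun x : ℝ => (f a * Real.exp (r*a)) * Real.exp (-r * x) := by
      funext x
      rw [mul_assoc, ← Real.exp_add]
      congr 2
      ring
    rw [heq]
    exact (exp_neg_integrableOn_Ioi a hr).const_mul _
  have hI : ∫ x in Ioi a, f a * Real.exp (-(r * (x - a))) = f a / r := by
    have hF : ∀ x ∈ Ici a, HasDerivAt (fun y => -(f a / r) * Real.exp (-(r * (y - a))))
        (f a * Real.exp (-(r * (x - a)))) x := by
      intro x _
      have h1 : HasDerivAt (fun y : ℝ => -(r * (y - a))) (-r) x := by
        have := ((hasDerivAt_id x).sub_const a).const_mul r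
        simpa [Pi.neg_def] using this.neg
      have h2 := (Real.hasDerivAt_exp _).comp x h1
      have h3 := h2.const_mul (-(f a / r))
      exact h3.congr_deriv (by field_simp)
    have hlim : Tendsto (fun y => -(f a / r) * Real.exp (-(r * (y - a)))) atTop (nhds 0) := by
      have h1 : Tendsto (fun y : ℝ => -(r * (y - a))) atTop atBot := by
        apply Filter.tendsto_neg_atTop_atBot.comp
        apply Filter.Tendsto.const_mul_atTop hr
        exact tendsto_atTop_add_const_right _ (-a) tendsto_id
      have h2 := Real.tendsto_exp_atBot.comp h1
      have h3 := h2.const_mul (-(f a / r))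
      simpa using h3
    have := integral_Ioi_of_hasDerivAt_of_tendsto
      ((hF a self_mem_Ici).continuousAt.continuousWithinAt)
      (fun x hx => hF x (mem_of_mem_of_subset hx Ioi_subset_Ici_self))
      hint hlim
    rw [this]
    rw [show a - a = 0 by ring]
    simp [Real.exp_zero]
  -- Step 2+3 : bound the lintegral
  have hmono : ∫⁻ x in Ioi a, ENNReal.ofReal (f x) ≤ ENNReal.ofReal (f a / r) := by
    calc ∫⁻ x in Ioi a, ENNReal.ofReal (f x)
        ≤ ∫⁻ x in Ioi a, ENNReal.ofReal (f a * Real.exp (-(r * (x - a)))) := by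
          apply setLIntegral_mono
          · apply Measurable.ennreal_ofReal
            fun_prop
          · intro x hx
            exact ENNReal.ofReal_le_ofReal (hpoint x hx)
      _ = ENNReal.ofReal (∫ x in Ioi a, f a * Real.exp (-(r * (x - a)))) := by
          rw [ofReal_integral_eq_lintegral_ofReal hint]
          filter_upwards with x
          positivity
      _ = ENNReal.ofReal (f a / r) := by rw [hI]
  apply hmono.trans
  apply ENNReal.ofReal_le_ofReal
  -- Step 4+5 : the real-number bound
  set E : ℝ := Real.exp (4/3 * Real.sqrt (c^3 * L^3 / m)) with hE_def
  set D : ℝ := m ^ p * Real.exp (-m/2) / G with hD_def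
  have hE : 0 < E := Real.exp_pos _
  have hD : 0 < D := by rw [hD_def]; positivity
  have hnpos : (0:ℝ) < (n:ℝ) := by linarith
  set sm : ℝ := Real.sqrt m with hsm_def
  set sc : ℝ := Real.sqrt (c*L) with hsc_def
  set sp : ℝ := Real.sqrt π with hsp_def
  have hsm : 0 < sm := Real.sqrt_pos.mpr hm
  have hsc : 0 < sc := Real.sqrt_pos.mpr (by positivity)
  have hsp : 0 < sp := Real.sqrt_pos.mpr Real.pi_pos
  have hmm : sm * sm = m := Real.mul_self_sqrt hm.le
  have hcc : sc * sc = c * L := Real.mul_self_sqrt (by positivity)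
  have hsq : Real.sqrt (c*m*L) = sm * sc := by
    rw [show c*m*L = m*(c*L) by ring, Real.sqrt_mul hm.le, hsm_def, hsc_def]
  -- exponent computations
  have ht2 : t^2 = 4*(c*m*L) := by
    rw [ht_def, mul_pow, Real.sq_sqrt (by positivity)]; norm_num
  have ht3 : t^3/(6*m^2) = 4/3 * Real.sqrt (c^3*L^3/m) := by
    have h1 : Real.sqrt (c^3*L^3/m) = (c*L/m) * Real.sqrt (c*m*L) := by
      rw [show c^3*L^3/m = (c*L/m)^2 * (c*m*L) by field_simp,
        Real.sqrt_mul (sq_nonneg _), Real.sqrt_sq (by positivity : (0:ℝ) ≤ c*L/m)]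
    have h2 : t^3 = 8 * (c*m*L) * Real.sqrt (c*m*L) := by
      have hx : Real.sqrt (c*m*L) ^ 3 = (c*m*L) * Real.sqrt (c*m*L) := by
        rw [pow_succ, Real.sq_sqrt (by positivity)]
      rw [ht_def, mul_pow, hx]
      ring
    rw [h1, h2]
    field_simp
    ring
  have key2 : Real.exp (-(c*L)) = (n:ℝ)^(-c) := by
    rw [Real.rpow_def_of_pos hnpos, hL_def]
    congr 1
    ring
  -- key1 : bound on f a
  have hS : Real.log (1 + t/m) * p ≤ -(c*L) + 4/3 * Real.sqrt (c^3*L^3/m) + t/2 := by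
    have h := log_le_cubic (u := t/m) (by positivity)
    have hmul : (t/m - (t/m)^2/2 + (t/m)^3/3) * p = t/2 - t^2/(4*m) + t^3/(6*m^2) := by
      rw [hpm]; field_simp; ring
    calc Real.log (1 + t/m) * p ≤ (t/m - (t/m)^2/2 + (t/m)^3/3) * p :=
          mul_le_mul_of_nonneg_right h hp0.le
      _ = t/2 - t^2/(4*m) + t^3/(6*m^2) := hmul
      _ = -(c*L) + 4/3 * Real.sqrt (c^3*L^3/m) + t/2 := by
          rw [ht3, ht2]; field_simp; ring
  have key1 : f a ≤ D * (Real.exp (-(c*L)) * E) := by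
    have hmt : a = m * (1 + t/m) := by field_simp; exact ha_def
    have hrp : a ^ p = m ^ p * Real.exp (Real.log (1 + t/m) * p) := by
      rw [hmt, Real.mul_rpow hm.le (by positivity)]
      congr 1
      exact Real.rpow_def_of_pos (by positivity) p
    have he : (-(c*L) + 4/3 * Real.sqrt (c^3*L^3/m) + t/2) + (-a/2) =
        (-m/2) + (-(c*L) + 4/3 * Real.sqrt (c^3*L^3/m)) := by
      rw [ha_def]; ring
    calc f a = m ^ p * Real.exp (Real.log (1 + t/m) * p) * Real.exp (-a/2) / G := by
          rw [hf_def]; simp only; rw [hrp]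
      _ ≤ m ^ p * Real.exp (-(c*L) + 4/3 * Real.sqrt (c^3*L^3/m) + t/2) * Real.exp (-a/2) / G := by
          gcongr
      _ = D * (Real.exp (-(c*L)) * E) := by
          have hprod : Real.exp (-(c*L) + 4/3 * Real.sqrt (c^3*L^3/m) + t/2) *
              Real.exp (-a/2) = Real.exp (-m/2) *
              (Real.exp (-(c*L)) * Real.exp (4/3 * Real.sqrt (c^3*L^3/m))) := by
            have harg : (-(c*L) + 4/3 * Real.sqrt (c^3*L^3/m) + t/2) + (-a/2) =
                (-m/2) + (-(c*L) + (4/3 * Real.sqrt (c^3*L^3/m))) := by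
              rw [ha_def]; ring
            rw [← Real.exp_add, ← Real.exp_add, ← Real.exp_add, harg]
          calc m ^ p * Real.exp (-(c*L) + 4/3 * Real.sqrt (c^3*L^3/m) + t/2) *
                Real.exp (-a/2) / G
              = m ^ p * (Real.exp (-(c*L) + 4/3 * Real.sqrt (c^3*L^3/m) + t/2) *
                Real.exp (-a/2)) / G := by ring
            _ = m ^ p * (Real.exp (-m/2) *
                (Real.exp (-(c*L)) * Real.exp (4/3 * Real.sqrt (c^3*L^3/m)))) / G := by
                rw [hprod]
            _ = D * (Real.exp (-(c*L)) * E) := by rw [hD_def, hE_def]; ring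
  -- key3 : Stirling bound on D
  have key3 : D ≤ 1/(2*sp*sm) := by
    have hst := gamma_stirling (x := p) hp0
    have hG' : G = 2*(2:ℝ)^(p:ℝ)*Real.Gamma (p+1) := by
      rw [hG_def, show (n:ℝ)/2 = p+1 by rw [hp_def]; ring, Real.rpow_add two_pos,
        Real.rpow_one]
      ring
    have hm2p : m = 2*p := by rw [hpm]; ring
    have hid : 2*(2:ℝ)^(p:ℝ)*(Real.sqrt (2*π)*(p^(p:ℝ)*(Real.sqrt p*Real.exp (-p)))) =
        2*sp*sm*(m^(p:ℝ)*Real.exp (-m/2)) := by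
      rw [hsm_def, hsp_def, hm2p, Real.mul_rpow two_pos.le hp0.le,
        Real.sqrt_mul two_pos.le π, Real.sqrt_mul two_pos.le p,
        show -(2*p)/2 = -p by ring]
      ring
    have hGge : 2*sp*sm*(m^(p:ℝ)*Real.exp (-m/2)) ≤ G := by
      rw [hG', ← hid]
      have h2p : (0:ℝ) < 2*(2:ℝ)^(p:ℝ) := by positivity
      exact mul_le_mul_of_nonneg_left hst (by positivity)
    rw [hD_def, div_le_div_iff₀ hG (by positivity)]
    calc m ^ p * Real.exp (-m/2) * (2*sp*sm) = 2*sp*sm*(m^(p:ℝ)*Real.exp (-m/2)) := by ring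
      _ ≤ G := hGge
      _ = 1 * G := (one_mul G).symm
  -- core coefficient bound
  have h2at : 2*a/t = sm/sc + 2 := by
    rw [div_eq_iff ht.ne', ha_def, ht_def, hsq, ← hmm]
    field_simp
  have hcore : D * (2*a/t) ≤ 1 / Real.sqrt (π*m) + 1 / (2*Real.sqrt (c*π*L)) := by
    have e1 : Real.sqrt (π*m) = sp * sm := by
      rw [Real.sqrt_mul Real.pi_pos.le, hsp_def, hsm_def]
    have e2 : Real.sqrt (c*π*L) = sp * sc := by
      rw [show c*π*L = π*(c*L) by ring, Real.sqrt_mul Real.pi_pos.le, hsp_def, hsc_def]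
    rw [h2at, e1, e2]
    calc D * (sm/sc + 2) ≤ (1/(2*sp*sm)) * (sm/sc + 2) := by
          apply mul_le_mul_of_nonneg_right key3 (by positivity)
      _ = 1/(sp*sm) + 1/(2*(sp*sc)) := by
          field_simp
          ring
  calc f a / r = f a * (2*a/t) := by rw [hr_def, div_div_eq_mul_div, mul_div_assoc]
    _ ≤ (D * (Real.exp (-(c*L)) * E)) * (2*a/t) := by
        apply mul_le_mul_of_nonneg_right key1 (by positivity)
    _ = (D * (2*a/t)) * E * ((n:ℝ)^(-c)) := by rw [← key2]; ring
    _ ≤ (1 / Real.sqrt (π*m) + 1 / (2*Real.sqrt (c*π*L))) * E * ((n:ℝ)^(-c)) := by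
        apply mul_le_mul_of_nonneg_right _ (by positivity)
        apply mul_le_mul_of_nonneg_right hcore hE.le


open MeasureTheory

/-- Tail bound for the chi-squared distribution with `n > 2` degrees of freedom:
`P(x > n - 2 + 2√(c(n-2)ln n)) ≤ α n^{-c}`. The chi-squared distribution is given by
its density `x^{n/2-1} e^{-x/2} / (2^{n/2} Γ(n/2))` on `(0, ∞)`. -/
theorem chiSq_tail_bound (n : ℕ) (hn : 2 < n) (c : ℝ) (hc : 0 < c) :
    (volume.withDensity fun x : ℝ => ENNReal.ofReal
        (if 0 < x then
          x ^ ((n : ℝ) / 2 - 1) * Real.exp (-x / 2) /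
            (2 ^ ((n : ℝ) / 2) * Real.Gamma ((n : ℝ) / 2))
        else 0))
      {x : ℝ | (n : ℝ) - 2 + 2 * Real.sqrt (c * ((n : ℝ) - 2) * Real.log n) < x}
    ≤ ENNReal.ofReal
        ((1 / Real.sqrt (Real.pi * ((n : ℝ) - 2)) +
            1 / (2 * Real.sqrt (c * Real.pi * Real.log n))) *
          Real.exp (4 / 3 * Real.sqrt (c ^ 3 * Real.log n ^ 3 / ((n : ℝ) - 2))) *
          (n : ℝ) ^ (-c)) :=
  chiSq_tail_bound' n hn c hc
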